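/- If the set transformation R satisfies ν(R(∅)) = 0, then for any nonnegative simple function f = Σ_{k=1}^N b_k χ_{F_k} with b_k > 0 and F_1 ⊆ F_2 ⊆ ⋯ ⊆ F_N an increasing sequence of measurable sets, the rearrangement satisfies f*_R(y) = Σ_{k=1}^N b_k χ_{R(F_k)}(y) for ν-a.e. y ∈ Y. -/

import Mathlib

open MeasureTheory Set Filter
open scoped ENNReal

/-- The rearrangement of `f` with respect to the set transformation `R`,
defined by the layer cake formula `f*_R(y) = ∫₀^∞ χ_{R({|f| > t})}(y) dt`. -/
noncomputable def rearr {X Y : Type*} (R : Set X → Set Y) (f : X → ℝ) (y : Y) : ℝ≥0∞ :=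
  ∫⁻ t in Set.Ioi (0 : ℝ), (R {x | t < |f x|}).indicator (fun _ => (1 : ℝ≥0∞)) y

theorem stmt0 {X Y : Type*} [MeasurableSpace X] [MeasurableSpace Y]
    (μ : Measure X) (ν : Measure Y) (R : Set X → Set Y)
    (hR0 : ν (R ∅) = 0)
    (N : ℕ) (b : Fin N → ℝ) (hb : ∀ k, 0 < b k)
    (F : Fin N → Set X) (hFmeas : ∀ k, MeasurableSet (F k))
    (hFmono : ∀ k l : Fin N, k ≤ l → F k ⊆ F l) :
    ∀ᵐ y ∂ν,
      rearr R (fun x => ∑ k, b k * (F k).indicator (fun _ => (1 : ℝ)) x) y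
        = ∑ k, ENNReal.ofReal (b k) * (R (F k)).indicator (fun _ => (1 : ℝ≥0∞)) y := by
  classical
  set f : X → ℝ := fun x => ∑ k, b k * (F k).indicator (fun _ => (1 : ℝ)) x with hfdef
  set c : ℕ → ℝ := fun j => ∑ k : Fin N, if j ≤ (k : ℕ) then b k else 0 with hcdef
  have hterm_nn : ∀ (k : Fin N) (x : X), 0 ≤ b k * (F k).indicator (fun _ => (1 : ℝ)) x := by
    intro k x
    exact mul_nonneg (hb k).le (Set.indicator_nonneg (fun _ _ => zero_le_one) x)
  have hterm_le : ∀ (k : Fin N) (x : X), b k * (F k).indicator (fun _ => (1 : ℝ)) x ≤ b k := by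
    intro k x
    calc b k * (F k).indicator (fun _ => (1 : ℝ)) x ≤ b k * 1 := by
          refine mul_le_mul_of_nonneg_left ?_ (hb k).le
          exact Set.indicator_le' (fun _ _ => le_refl _) (fun _ _ => zero_le_one) x
      _ = b k := mul_one _
  have hfnn : ∀ x, 0 ≤ f x := fun x => Finset.sum_nonneg fun k _ => hterm_nn k x
  have habs : ∀ x, |f x| = f x := fun x => abs_of_nonneg (hfnn x)
  have hcN : c N = 0 := by
    refine Finset.sum_eq_zero fun k _ => if_neg (Nat.not_le.mpr k.isLt)
  have hcnn : ∀ j, 0 ≤ c j := by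
    intro j
    refine Finset.sum_nonneg fun k _ => ?_
    split <;> simp [(hb k).le]
  have hcanti : ∀ i j : ℕ, i ≤ j → c j ≤ c i := by
    intro i j hij
    refine Finset.sum_le_sum fun k _ => ?_
    by_cases h : j ≤ (k : ℕ)
    · rw [if_pos h, if_pos (hij.trans h)]
    · rw [if_neg h]; split <;> simp [(hb _).le]
  have hdiff : ∀ k : Fin N, c (k : ℕ) - c ((k : ℕ) + 1) = b k := by
    intro k
    rw [hcdef]
    simp only
    rw [← Finset.sum_sub_distrib]
    rw [Finset.sum_congr rfl (g := fun l : Fin N => if l = k then b l else 0)]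
    · simp
    · intro l _
      rcases lt_trichotomy (l : ℕ) (k : ℕ) with h | h | h
      · rw [if_neg (by omega), if_neg (by omega), if_neg (by exact Fin.ne_of_val_ne (by omega))]
        ring
      · rw [if_pos (by omega), if_neg (by omega), if_pos (by exact Fin.eq_of_val_eq h)]
        ring
      · rw [if_pos (by omega), if_pos (by omega), if_neg (by exact Fin.ne_of_val_ne (by omega))]
        ring
  -- lower bound: membership gives f x ≥ c k
  have hflow : ∀ (k : Fin N) (x : X), x ∈ F k → c (k : ℕ) ≤ f x := by
    intro k x hx
    refine Finset.sum_le_sum fun l _ => ?_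
    by_cases h : (k : ℕ) ≤ (l : ℕ)
    · rw [if_pos h]
      have hxl : x ∈ F l := hFmono k l h hx
      rw [Set.indicator_of_mem hxl, mul_one]
    · rw [if_neg h]; exact hterm_nn l x
  have hfhigh : ∀ (k : Fin N) (x : X), x ∉ F k → f x ≤ c ((k : ℕ) + 1) := by
    intro k x hx
    refine Finset.sum_le_sum fun l _ => ?_
    by_cases h : (k : ℕ) + 1 ≤ (l : ℕ)
    · rw [if_pos h]; exact hterm_le l x
    · rw [if_neg h]
      have hxl : x ∉ F l := fun hxl => hx (hFmono l k (by omega) hxl)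
      rw [Set.indicator_of_notMem hxl, mul_zero]
  have hftop : ∀ x, f x ≤ c 0 := by
    intro x
    refine Finset.sum_le_sum fun l _ => ?_
    rw [if_pos (Nat.zero_le _)]; exact hterm_le l x
  have hlevel : ∀ t : ℝ, ∀ k : Fin N, c ((k : ℕ) + 1) ≤ t → t < c (k : ℕ) →
      {x | t < |f x|} = F k := by
    intro t k h1 h2
    ext x
    simp only [Set.mem_setOf_eq, habs]
    constructor
    · intro ht
      by_contra hx
      exact absurd (lt_of_lt_of_le ht (hfhigh k x hx)) (not_lt.mpr h1)
    · intro hx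
      exact lt_of_lt_of_le h2 (hflow k x hx)
  have hempty : ∀ t : ℝ, c 0 ≤ t → {x | t < |f x|} = ∅ := by
    intro t ht
    ext x
    simp only [Set.mem_setOf_eq, habs, Set.mem_empty_iff_false, iff_false, not_lt]
    exact (hftop x).trans ht
  have hRnull : ∀ᵐ y ∂ν, y ∉ R ∅ := by
    rw [ae_iff]
    simp only [not_not, Set.setOf_mem_eq]
    exact hR0
  filter_upwards [hRnull] with y hy
  -- key pointwise identity for the integrand
  have key : ∀ t ∈ Set.Ioi (0 : ℝ),
      (R {x | t < |f x|}).indicator (fun _ => (1 : ℝ≥0∞)) y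
        = ∑ k : Fin N, (Set.Ico (c ((k : ℕ) + 1)) (c (k : ℕ))).indicator
            (fun _ => (R (F k)).indicator (fun _ => (1 : ℝ≥0∞)) y) t := by
    intro t ht
    rw [Set.mem_Ioi] at ht
    by_cases htc : c 0 ≤ t
    · rw [hempty t htc, Set.indicator_of_notMem hy]
      symm
      refine Finset.sum_eq_zero fun k _ => ?_
      refine Set.indicator_of_notMem ?_ _
      intro htk
      exact absurd htk.2 (not_lt.mpr ((hcanti 0 (k : ℕ) (Nat.zero_le _)).trans htc))
    · push_neg at htc
      have hN0 : 0 < N := by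
        rcases Nat.eq_zero_or_pos N with h | h
        · subst h
          simp [hcdef] at htc
          linarith
        · exact h
      have hex : ∃ j, c (j + 1) ≤ t :=
        ⟨N, (hcanti N (N + 1) (Nat.le_succ N)).trans (by rw [hcN]; exact ht.le)⟩
      set j := Nat.find hex with hjdef
      have hj1 : c (j + 1) ≤ t := Nat.find_spec hex
      have hfind_le : j ≤ N - 1 :=
        Nat.find_le (by rw [Nat.sub_add_cancel hN0, hcN]; exact ht.le)
      have hjN : j < N := by omega
      have hj2 : t < c j := by
        rcases Nat.eq_zero_or_pos j with h0 | h0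
        · rw [h0]; exact htc
        · have hmin := Nat.find_min hex (m := j - 1) (by omega)
          push_neg at hmin
          have hj : j - 1 + 1 = j := by omega
          rw [hj] at hmin
          exact hmin
      set k : Fin N := ⟨j, hjN⟩ with hkdef
      rw [hlevel t k hj1 hj2]
      rw [Finset.sum_eq_single k]
      · rw [Set.indicator_of_mem (Set.mem_Ico.mpr ⟨hj1, hj2⟩)]
      · intro l _ hl
        refine Set.indicator_of_notMem ?_ _
        rw [Set.mem_Ico]
        rintro ⟨hl1, hl2⟩
        have hlj : (l : ℕ) ≠ j := fun h => hl (Fin.eq_of_val_eq h)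
        rcases lt_or_gt_of_ne hlj with h | h
        · exact absurd hj2 (not_lt.mpr (((hcanti ((l : ℕ) + 1) j (by omega)).trans hl1)))
        · exact absurd hl2 (not_lt.mpr (((hcanti (j + 1) (l : ℕ) (by omega)).trans hj1)))
      · intro h
        exact absurd (Finset.mem_univ k) h
  -- now compute the integral
  rw [rearr]
  calc ∫⁻ t in Set.Ioi (0 : ℝ), (R {x | t < |f x|}).indicator (fun _ => (1 : ℝ≥0∞)) y
      = ∫⁻ t in Set.Ioi (0 : ℝ), ∑ k : Fin N,
          (Set.Ico (c ((k : ℕ) + 1)) (c (k : ℕ))).indicator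
            (fun _ => (R (F k)).indicator (fun _ => (1 : ℝ≥0∞)) y) t := by
        exact setLIntegral_congr_fun measurableSet_Ioi key
    _ = ∑ k : Fin N, ∫⁻ t in Set.Ioi (0 : ℝ),
          (Set.Ico (c ((k : ℕ) + 1)) (c (k : ℕ))).indicator
            (fun _ => (R (F k)).indicator (fun _ => (1 : ℝ≥0∞)) y) t := by
        refine lintegral_finset_sum _ fun k _ => ?_
        exact (measurable_const.indicator measurableSet_Ico)
    _ = ∑ k : Fin N, ENNReal.ofReal (b k) * (R (F k)).indicator (fun _ => (1 : ℝ≥0∞)) y := by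
        refine Finset.sum_congr rfl fun k _ => ?_
        rw [lintegral_indicator_const measurableSet_Ico,
          Measure.restrict_apply measurableSet_Ico]
        have hvol : volume (Set.Ico (c ((k : ℕ) + 1)) (c (k : ℕ)) ∩ Set.Ioi 0)
            = ENNReal.ofReal (b k) := by
          refine le_antisymm ?_ ?_
          · calc volume (Set.Ico (c ((k : ℕ) + 1)) (c (k : ℕ)) ∩ Set.Ioi 0)
                ≤ volume (Set.Ico (c ((k : ℕ) + 1)) (c (k : ℕ))) :=
                  measure_mono Set.inter_subset_left
              _ = ENNReal.ofReal (c (k : ℕ) - c ((k : ℕ) + 1)) := Real.volume_Ico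
              _ = ENNReal.ofReal (b k) := by rw [hdiff k]
          · calc ENNReal.ofReal (b k)
                = volume (Set.Ioo (c ((k : ℕ) + 1)) (c (k : ℕ))) := by
                  rw [Real.volume_Ioo, hdiff k]
              _ ≤ volume (Set.Ico (c ((k : ℕ) + 1)) (c (k : ℕ)) ∩ Set.Ioi 0) := by
                  refine measure_mono fun s hs => ?_
                  rw [Set.mem_Ioo] at hs
                  exact ⟨Set.mem_Ico.mpr ⟨hs.1.le, hs.2⟩,
                    Set.mem_Ioi.mpr (lt_of_le_of_lt (hcnn _) hs.1)⟩
        rw [hvol, mul_comm]
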